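/- Let G be a cycle graph with simple demand digraph H. If some arc of the directed version of G is contained in at least three routes, then there exist a partition of a nonatomic population into the sets I_ℓ and an assignment of strictly increasing, continuous, affine cost functions such that two Nash equilibria with distinct flows on some arc exist. -/

import Mathlib

open scoped Classical
open MeasureTheory

/-- The positive (counterclockwise) route of the OD-pair `(o, d)` on the cycle with
vertex set `ZMod n` contains the positive arc at edge `v` (the arc from `v` to `v + 1`)
iff `posRoute n o d v` holds. -/
def posRoute (n : ℕ) (o d v : ZMod n) : Prop := (v - o).val < (d - o).val

/-- The negative (clockwise) route of `(o, d)` contains the negative arc at edge `v`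
(the arc from `v + 1` to `v`) iff `negRoute n o d v` holds. -/
def negRoute (n : ℕ) (o d v : ZMod n) : Prop := (v - d).val < (o - d).val

/-- An arc of the directed version of the cycle is a pair `(v, b)`: for `b = true` the
positive arc `v → v + 1`, for `b = false` the negative arc `v + 1 → v`.
`inRoute n o d b a` says that arc `a` lies on the route of direction `b` of the
OD-pair `(o, d)`. -/
def inRoute (n : ℕ) (o d : ZMod n) (b : Bool) (a : ZMod n × Bool) : Prop :=
  a.2 = b ∧ (if b then posRoute n o d a.1 else negRoute n o d a.1)

/-- Flow induced on arc `a` by the strategy profile `σ` (`σ i = true` means that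
user `i` chooses their positive route, `σ i = false` their negative route). -/
noncomputable def flow {I : Type} [MeasurableSpace I] (μ : Measure I) (n : ℕ)
    (od : I → ZMod n × ZMod n) (σ : I → Bool) (a : ZMod n × Bool) : ℝ :=
  (μ {i | inRoute n (od i).1 (od i).2 (σ i) a}).toReal

/-- The cost, for user `i`, of their route in direction `b`, given arc flows `f`:
the sum over the arcs of that route of the user-specific arc costs. -/
noncomputable def routeCost {I : Type} (n : ℕ) [NeZero n]
    (c : I → ZMod n × Bool → ℝ → ℝ) (f : ZMod n × Bool → ℝ)
    (od : I → ZMod n × ZMod n) (i : I) (b : Bool) : ℝ :=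
  ∑ a ∈ Finset.univ.filter (fun a : ZMod n × Bool => inRoute n (od i).1 (od i).2 b a),
    c i a (f a)

/-- `σ` is a Nash equilibrium: every user's chosen route is a minimal-cost route
given the induced flows. -/
def IsEquilibrium {I : Type} [MeasurableSpace I] (μ : Measure I) (n : ℕ) [NeZero n]
    (od : I → ZMod n × ZMod n) (c : I → ZMod n × Bool → ℝ → ℝ) (σ : I → Bool) : Prop :=
  ∀ (i : I) (b : Bool),
    routeCost n c (flow μ n od σ) od i (σ i) ≤ routeCost n c (flow μ n od σ) od i b

lemma val_sub_eq (n : ℕ) [NeZero n] (x k : ZMod n) (hk : k ≠ 0) :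
    (x - k).val = (x.val + (n - k.val)) % n := by
  have : x - k = x + (-k) := by ring
  rw [this, ZMod.val_add, ZMod.neg_val, if_neg hk]

lemma negRoute_iff (n : ℕ) [NeZero n] (o d : ZMod n) (h : o ≠ d) (u : ZMod n) :
    negRoute n o d u ↔ ¬ posRoute n o d u := by
  have hk : d - o ≠ 0 := sub_ne_zero.mpr (Ne.symm h)
  have hknk : -(d - o) = o - d := by ring
  have hud : u - d = (u - o) - (d - o) := by ring
  set x := u - o with hx
  set k := d - o with hkdef
  have hkv : 1 ≤ k.val := Nat.one_le_iff_ne_zero.mpr (fun hz => hk ((ZMod.val_eq_zero k).mp hz))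
  have hkvlt : k.val < n := ZMod.val_lt k
  have hxlt : x.val < n := ZMod.val_lt x
  have hok : (o - d).val = n - k.val := by
    rw [← hknk, ZMod.neg_val, if_neg hk]
  unfold negRoute posRoute
  rw [hud, hok, ← hx, ← hkdef, val_sub_eq n x k hk]
  rcases lt_or_ge x.val k.val with hlt | hge
  · have h1 : x.val + (n - k.val) < n := by omega
    rw [Nat.mod_eq_of_lt h1]
    omega
  · have h2 : x.val + (n - k.val) = (x.val - k.val) + n := by omega
    rw [h2, Nat.add_mod_right, Nat.mod_eq_of_lt (by omega)]
    omega

lemma posRoute_self (n : ℕ) [NeZero n] (o d : ZMod n) (h : o ≠ d) : posRoute n o d o := by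
  unfold posRoute
  rw [sub_self, ZMod.val_zero]
  exact Nat.pos_of_ne_zero (fun hz => (Ne.symm h) (sub_eq_zero.mp ((ZMod.val_eq_zero _).mp hz)))

lemma negRoute_self (n : ℕ) [NeZero n] (o d : ZMod n) (h : o ≠ d) : negRoute n o d d := by
  unfold negRoute
  rw [sub_self, ZMod.val_zero]
  exact Nat.pos_of_ne_zero (fun hz => h (sub_eq_zero.mp ((ZMod.val_eq_zero _).mp hz)))

lemma posRoute_inj (n : ℕ) [NeZero n] (hn : 2 ≤ n) (o d o' d' : ZMod n) (h : o ≠ d) (h' : o' ≠ d')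
    (hEq : ∀ u, posRoute n o d u ↔ posRoute n o' d' u) : o = o' ∧ d = d' := by
  have hk : d - o ≠ 0 := sub_ne_zero.mpr (Ne.symm h)
  have hk' : d' - o' ≠ 0 := sub_ne_zero.mpr (Ne.symm h')
  set κ := (d - o).val with hκ
  set κ' := (d' - o').val with hκ'
  have hκ1 : 1 ≤ κ := Nat.one_le_iff_ne_zero.mpr (fun hz => hk ((ZMod.val_eq_zero _).mp hz))
  have hκ'1 : 1 ≤ κ' := Nat.one_le_iff_ne_zero.mpr (fun hz => hk' ((ZMod.val_eq_zero _).mp hz))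
  have hκlt : κ < n := ZMod.val_lt _
  have hκ'lt : κ' < n := ZMod.val_lt _
  -- o = o'
  have hoo' : o = o' := by
    by_contra hne
    -- o' ∈ P (since o' ∈ P' trivially)
    have ho'P : posRoute n o d o' := (hEq o').mpr (posRoute_self n o' d' h')
    set t := (o' - o).val with ht
    have htpos : 1 ≤ t := Nat.one_le_iff_ne_zero.mpr
      (fun hz => (Ne.symm hne) (sub_eq_zero.mp ((ZMod.val_eq_zero _).mp hz)))
    have htlt : t < κ := ho'P
    -- consider u = o' - 1 : not in P', hence not in P
    have hnP' : ¬ posRoute n o' d' (o' - 1) := by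
      unfold posRoute
      have : (o' - 1 - o') = -1 := by ring
      rw [this]
      haveI : Fact (1 < n) := ⟨by omega⟩
      have h1 : ((-1 : ZMod n)).val = n - 1 := by
        rw [show (-1 : ZMod n) = -(1:ZMod n) by ring, ZMod.neg_val,
          if_neg (one_ne_zero), ZMod.val_one]
      rw [h1]
      omega
    have hnP : ¬ posRoute n o d (o' - 1) := fun hp => hnP' ((hEq _).mp hp)
    apply hnP
    unfold posRoute
    have : o' - 1 - o = (o' - o) - 1 := by ring
    rw [this]
    have hoo : o' - o = ((t : ℕ) : ZMod n) := (ZMod.natCast_rightInverse (o' - o)).symm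
    rw [hoo]
    have : ((t : ℕ) : ZMod n) - 1 = (((t - 1 : ℕ)) : ZMod n) := by
      have : (t : ℕ) = (t - 1) + 1 := by omega
      rw [this]; push_cast; ring
    rw [this, ZMod.val_cast_of_lt (by omega)]
    omega
  -- κ = κ'
  have hκκ' : κ = κ' := by
    by_contra hne
    rcases Nat.lt_or_ge κ κ' with hlt | hge
    · -- u := o + κ ∉ P but ∈ P'
      have h1 : ¬ posRoute n o d (o + (κ : ZMod n)) := by
        unfold posRoute
        have : o + (κ : ZMod n) - o = (κ : ZMod n) := by ring
        rw [this, ZMod.val_cast_of_lt hκlt]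
        omega
      apply h1
      apply (hEq _).mpr
      unfold posRoute
      rw [hoo']
      have : o' + (κ : ZMod n) - o' = (κ : ZMod n) := by ring
      rw [this, ZMod.val_cast_of_lt hκlt]
      omega
    · have hlt' : κ' < κ := by omega
      have h1 : ¬ posRoute n o' d' (o' + (κ' : ZMod n)) := by
        unfold posRoute
        have : o' + (κ' : ZMod n) - o' = (κ' : ZMod n) := by ring
        rw [this, ZMod.val_cast_of_lt hκ'lt]
        omega
      apply h1
      apply (hEq _).mp
      unfold posRoute
      rw [← hoo']
      have : o + (κ' : ZMod n) - o = (κ' : ZMod n) := by ring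
      rw [this, ZMod.val_cast_of_lt hκ'lt]
      omega
  refine ⟨hoo', ?_⟩
  have h1 : d - o = d' - o' := by
    have e1 : d - o = ((κ : ℕ) : ZMod n) := (ZMod.natCast_rightInverse (d - o)).symm
    have e2 : d' - o' = ((κ' : ℕ) : ZMod n) := (ZMod.natCast_rightInverse (d' - o')).symm
    rw [e1, e2, hκκ']
  rw [hoo'] at h1
  exact sub_left_inj.mp h1
/-- Key algebra lemma: given two disjoint nonempty finsets of arcs (the two routes),
flows `f`, `f'`, and a "favorable arc", construct affine costs making route `R`
optimal at `f` and route `S` optimal at `f'`. -/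
lemma exists_cost {A : Type} [Fintype A] [DecidableEq A] (R S : Finset A)
    (hd : Disjoint R S) (hR : R.Nonempty) (hS : S.Nonempty) (f f' : A → ℝ)
    (hfav : ∃ a, (a ∈ S ∧ f' a < f a) ∨ (a ∈ R ∧ f a < f' a)) :
    ∃ c : A → ℝ → ℝ,
      (∀ a, ∃ α β : ℝ, 0 < α ∧ 0 ≤ β ∧ ∀ x, c a x = α * x + β) ∧
      (∑ a ∈ R, c a (f a)) ≤ (∑ a ∈ S, c a (f a)) ∧
      (∑ a ∈ S, c a (f' a)) ≤ (∑ a ∈ R, c a (f' a)) := by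
  classical
  obtain ⟨a₀, h₀⟩ := hfav
  set δ : A → ℝ := fun a => f a - f' a with hδ
  set M : ℝ := (∑ a ∈ S, |δ a|) + (∑ a ∈ R, |δ a|) with hM
  have hM0 : 0 ≤ M := by
    apply add_nonneg <;> exact Finset.sum_nonneg (fun a _ => abs_nonneg _)
  have hd0 : 0 < |δ a₀| := by
    rcases h₀ with ⟨_, h⟩ | ⟨_, h⟩ <;> rw [abs_pos] <;> simp [hδ] <;> linarith
  set K : ℝ := (M + 1) / |δ a₀| + 1 with hK
  have hK1 : 1 ≤ K := by
    have h : 0 ≤ (M + 1) / |δ a₀| := by positivity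
    rw [hK]; linarith
  have hKd : (K - 1) * |δ a₀| = M + 1 := by
    rw [hK, add_sub_cancel_right, div_mul_cancel₀ _ (ne_of_gt hd0)]
  set α : A → ℝ := fun a => if a = a₀ then K else 1 with hα
  have hsumS : ∀ (g : A → ℝ) (T : Finset A), (∑ a ∈ T, α a * g a)
      = (∑ a ∈ T, g a) + (if a₀ ∈ T then (K - 1) * g a₀ else 0) := by
    intro g T
    have : ∀ a, α a * g a = g a + (if a = a₀ then (K - 1) * g a₀ else 0) := by
      intro a
      by_cases h : a = a₀ <;> simp [hα, h] <;> ring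
    rw [Finset.sum_congr rfl (fun a _ => this a), Finset.sum_add_distrib,
      Finset.sum_ite_eq' T a₀ (fun _ => (K - 1) * g a₀)]
  -- the key inequality : Σ_S α δ - Σ_R α δ ≥ 0
  have hkey : (∑ a ∈ R, α a * δ a) ≤ (∑ a ∈ S, α a * δ a) := by
    rw [hsumS, hsumS]
    have hbS : -(∑ a ∈ S, |δ a|) ≤ ∑ a ∈ S, δ a := by
      rw [← Finset.sum_neg_distrib]
      exact Finset.sum_le_sum (fun a _ => neg_abs_le _)
    have hbR : (∑ a ∈ R, δ a) ≤ ∑ a ∈ R, |δ a| :=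
      Finset.sum_le_sum (fun a _ => le_abs_self _)
    rcases h₀ with ⟨haS, h⟩ | ⟨haR, h⟩
    · have haR' : a₀ ∉ R := fun hmem => (Finset.disjoint_left.mp hd hmem) haS
      rw [if_pos haS, if_neg haR']
      have hδpos : δ a₀ = |δ a₀| := by
        rw [abs_of_pos]; simp [hδ]; linarith
      have : (K - 1) * δ a₀ = M + 1 := by rw [hδpos]; exact hKd
      rw [this]
      simp only [add_zero]
      have : M = (∑ a ∈ S, |δ a|) + (∑ a ∈ R, |δ a|) := hM
      linarith
    · have haS' : a₀ ∉ S := fun hmem => (Finset.disjoint_left.mp hd haR) hmem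
      rw [if_pos haR, if_neg haS']
      have hδneg : δ a₀ = -|δ a₀| := by
        rw [abs_of_neg]; ring_nf; simp [hδ]; linarith
      have : (K - 1) * δ a₀ = -(M + 1) := by rw [hδneg]; rw [mul_neg, hKd]
      rw [this]
      simp only [add_zero]
      linarith
  obtain ⟨eR, heR⟩ := hR
  obtain ⟨eS, heS⟩ := hS
  set B : ℝ := (∑ a ∈ S, α a * f a) - (∑ a ∈ R, α a * f a) with hB
  set β : A → ℝ := fun a => (if a = eR then max B 0 else 0) + (if a = eS then max (-B) 0 else 0)
    with hβ
  have hβ0 : ∀ a, 0 ≤ β a := by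
    intro a; simp only [hβ]
    apply add_nonneg <;> split <;> simp [le_max_right]
  have hsumβ : ∀ T : Finset A, (∑ a ∈ T, β a)
      = (if eR ∈ T then max B 0 else 0) + (if eS ∈ T then max (-B) 0 else 0) := by
    intro T
    simp only [hβ]
    rw [Finset.sum_add_distrib, Finset.sum_ite_eq' T eR (fun _ => max B 0),
      Finset.sum_ite_eq' T eS (fun _ => max (-B) 0)]
  have heRS : eR ∉ S := fun hmem => (Finset.disjoint_left.mp hd heR) hmem
  have heSR : eS ∉ R := fun hmem => (Finset.disjoint_left.mp hd hmem) heS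
  have hβR : (∑ a ∈ R, β a) = max B 0 := by
    rw [hsumβ, if_pos heR, if_neg heSR, add_zero]
  have hβS : (∑ a ∈ S, β a) = max (-B) 0 := by
    rw [hsumβ, if_neg heRS, if_pos heS, zero_add]
  have hmaxdiff : max B 0 - max (-B) 0 = B := by
    rcases le_total B 0 with h | h
    · rw [max_eq_right h, max_eq_left (by linarith)]; ring
    · rw [max_eq_left h, max_eq_right (by linarith)]; ring
  refine ⟨fun a x => α a * x + β a, ?_, ?_, ?_⟩
  · intro a
    refine ⟨α a, β a, ?_, hβ0 a, fun x => rfl⟩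
    simp only [hα]; split <;> [linarith; norm_num]
  · have eRe : (∑ a ∈ R, (α a * f a + β a)) = (∑ a ∈ R, α a * f a) + max B 0 := by
      rw [Finset.sum_add_distrib, hβR]
    have eSe : (∑ a ∈ S, (α a * f a + β a)) = (∑ a ∈ S, α a * f a) + max (-B) 0 := by
      rw [Finset.sum_add_distrib, hβS]
    rw [eRe, eSe]
    have : (∑ a ∈ S, α a * f a) = (∑ a ∈ R, α a * f a) + B := by rw [hB]; ring
    rw [this]
    linarith [hmaxdiff]
  · have eRe : (∑ a ∈ R, (α a * f' a + β a)) = (∑ a ∈ R, α a * f' a) + max B 0 := by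
      rw [Finset.sum_add_distrib, hβR]
    have eSe : (∑ a ∈ S, (α a * f' a + β a)) = (∑ a ∈ S, α a * f' a) + max (-B) 0 := by
      rw [Finset.sum_add_distrib, hβS]
    rw [eRe, eSe]
    have hB2 : (∑ a ∈ S, α a * f' a) - (∑ a ∈ R, α a * f' a) ≤ B := by
      have e1 : ∀ a, α a * δ a = α a * f a - α a * f' a := by
        intro a; simp [hδ]; ring
      have e2 : (∑ a ∈ R, α a * δ a) = (∑ a ∈ R, α a * f a) - (∑ a ∈ R, α a * f' a) := by
        rw [Finset.sum_congr rfl (fun a _ => e1 a), Finset.sum_sub_distrib]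
      have e3 : (∑ a ∈ S, α a * δ a) = (∑ a ∈ S, α a * f a) - (∑ a ∈ S, α a * f' a) := by
        rw [Finset.sum_congr rfl (fun a _ => e1 a), Finset.sum_sub_distrib]
      rw [e2, e3] at hkey
      simp only [hB]
      linarith
    linarith [hmaxdiff]
noncomputable def pwF {X : Type} (x₁ x₂ x₃ : X) : ℝ → X :=
  fun i => if i ≤ 2 then x₁ else if i ≤ 4 then x₂ else x₃

lemma measConstSet {α : Type*} [MeasurableSpace α] (P : Prop) :
    MeasurableSet {_x : α | P} := by
  by_cases h : P <;> simp [h]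

lemma pw_set_repr (n : ℕ) (ℓ₁ ℓ₂ ℓ₃ : ZMod n × ZMod n) (s₁ s₂ s₃ : Bool) (a : ZMod n × Bool) :
    {i : ℝ | inRoute n ((pwF ℓ₁ ℓ₂ ℓ₃ i)).1 ((pwF ℓ₁ ℓ₂ ℓ₃ i)).2 (pwF s₁ s₂ s₃ i) a}
    = (Set.Iic 2 ∩ {_x : ℝ | inRoute n ℓ₁.1 ℓ₁.2 s₁ a})
      ∪ (Set.Ioc 2 4 ∩ {_x : ℝ | inRoute n ℓ₂.1 ℓ₂.2 s₂ a})
      ∪ (Set.Ioi 4 ∩ {_x : ℝ | inRoute n ℓ₃.1 ℓ₃.2 s₃ a}) := by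
  ext x
  by_cases h1 : x ≤ 2
  · have h2 : x ≤ 4 := by linarith
    have h3 : ¬ (2:ℝ) < x := not_lt.mpr h1
    have h4 : ¬ (4:ℝ) < x := not_lt.mpr h2
    simp [pwF, h1, h2, h3, h4]
  · by_cases h2 : x ≤ 4
    · have h3 : (2:ℝ) < x := not_le.mp h1
      have h4 : ¬ (4:ℝ) < x := not_lt.mpr h2
      simp [pwF, h1, h2, h3, h4]
    · have h4 : (4:ℝ) < x := not_le.mp h2
      have h3 : (2:ℝ) < x := by linarith
      simp [pwF, h1, h2, h3, h4]

lemma pw_measurable (n : ℕ) (ℓ₁ ℓ₂ ℓ₃ : ZMod n × ZMod n) (s₁ s₂ s₃ : Bool) (a : ZMod n × Bool) :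
    MeasurableSet {i : ℝ | inRoute n ((pwF ℓ₁ ℓ₂ ℓ₃ i)).1 ((pwF ℓ₁ ℓ₂ ℓ₃ i)).2 (pwF s₁ s₂ s₃ i) a} := by
  rw [pw_set_repr]
  exact (((measurableSet_Iic).inter (measConstSet _)).union
    ((measurableSet_Ioc).inter (measConstSet _))).union
    ((measurableSet_Ioi).inter (measConstSet _))

lemma flow_eq (n : ℕ) (ℓ₁ ℓ₂ ℓ₃ : ZMod n × ZMod n) (s₁ s₂ s₃ : Bool) (a : ZMod n × Bool) :
    flow (volume.restrict (Set.Ioc 0 7)) n (pwF ℓ₁ ℓ₂ ℓ₃) (pwF s₁ s₂ s₃) a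
    = (if inRoute n ℓ₁.1 ℓ₁.2 s₁ a then (2:ℝ) else 0)
      + (if inRoute n ℓ₂.1 ℓ₂.2 s₂ a then 2 else 0)
      + (if inRoute n ℓ₃.1 ℓ₃.2 s₃ a then 3 else 0) := by
  unfold flow
  rw [pw_set_repr]
  set C1 := {_x : ℝ | inRoute n ℓ₁.1 ℓ₁.2 s₁ a} with hC1
  set C2 := {_x : ℝ | inRoute n ℓ₂.1 ℓ₂.2 s₂ a} with hC2
  set C3 := {_x : ℝ | inRoute n ℓ₃.1 ℓ₃.2 s₃ a} with hC3
  set μ₀ := volume.restrict (Set.Ioc (0:ℝ) 7) with hμ₀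
  have hd12 : Disjoint (Set.Iic (2:ℝ) ∩ C1) (Set.Ioc (2:ℝ) 4 ∩ C2) := by
    rw [Set.disjoint_left]
    rintro x ⟨hx, -⟩ ⟨hx', -⟩
    simp only [Set.mem_Iic] at hx
    simp only [Set.mem_Ioc] at hx'
    linarith [hx'.1]
  have hd3 : Disjoint ((Set.Iic (2:ℝ) ∩ C1) ∪ (Set.Ioc (2:ℝ) 4 ∩ C2)) (Set.Ioi (4:ℝ) ∩ C3) := by
    rw [Set.disjoint_left]
    rintro x (⟨hx, -⟩ | ⟨hx, -⟩) ⟨hx', -⟩ <;>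
      simp only [Set.mem_Iic, Set.mem_Ioc, Set.mem_Ioi] at hx hx' <;> first
        | linarith
        | linarith [hx.2]
  have hm2 : MeasurableSet (Set.Ioc (2:ℝ) 4 ∩ C2) := measurableSet_Ioc.inter (measConstSet _)
  have hm3 : MeasurableSet (Set.Ioi (4:ℝ) ∩ C3) := measurableSet_Ioi.inter (measConstSet _)
  rw [measure_union hd3 hm3, measure_union hd12 hm2]
  have i1 : Set.Iic (2:ℝ) ∩ Set.Ioc 0 7 = Set.Ioc (0:ℝ) 2 := by
    ext x; simp only [Set.mem_inter_iff, Set.mem_Iic, Set.mem_Ioc]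
    constructor
    · rintro ⟨h, h0, h7⟩; exact ⟨h0, h⟩
    · rintro ⟨h0, h2⟩; exact ⟨h2, h0, by linarith⟩
  have i2 : Set.Ioc (2:ℝ) 4 ∩ Set.Ioc 0 7 = Set.Ioc (2:ℝ) 4 := by
    ext x; simp only [Set.mem_inter_iff, Set.mem_Ioc]
    constructor
    · rintro ⟨h, -⟩; exact h
    · rintro ⟨h2, h4⟩; exact ⟨⟨h2, h4⟩, by linarith, by linarith⟩
  have i3 : Set.Ioi (4:ℝ) ∩ Set.Ioc 0 7 = Set.Ioc (4:ℝ) 7 := by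
    ext x; simp only [Set.mem_inter_iff, Set.mem_Ioi, Set.mem_Ioc]
    constructor
    · rintro ⟨h, h0, h7⟩; exact ⟨h, h7⟩
    · rintro ⟨h4, h7⟩; exact ⟨h4, by linarith, h7⟩
  have p1 : μ₀ (Set.Iic (2:ℝ) ∩ C1)
      = if inRoute n ℓ₁.1 ℓ₁.2 s₁ a then ENNReal.ofReal 2 else 0 := by
    by_cases h : inRoute n ℓ₁.1 ℓ₁.2 s₁ a <;>
      simp [hC1, h, hμ₀, Measure.restrict_apply' measurableSet_Ioc, i1, Real.volume_Ioc] <;>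
      norm_num
  have p2 : μ₀ (Set.Ioc (2:ℝ) 4 ∩ C2)
      = if inRoute n ℓ₂.1 ℓ₂.2 s₂ a then ENNReal.ofReal 2 else 0 := by
    by_cases h : inRoute n ℓ₂.1 ℓ₂.2 s₂ a <;>
      simp [hC2, h, hμ₀, Measure.restrict_apply' measurableSet_Ioc, i2, Real.volume_Ioc] <;>
      norm_num
  have p3 : μ₀ (Set.Ioi (4:ℝ) ∩ C3)
      = if inRoute n ℓ₃.1 ℓ₃.2 s₃ a then ENNReal.ofReal 3 else 0 := by
    by_cases h : inRoute n ℓ₃.1 ℓ₃.2 s₃ a <;>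
      simp [hC3, h, hμ₀, Measure.restrict_apply' measurableSet_Ioc, i3, Real.volume_Ioc] <;>
      norm_num
  rw [p1, p2, p3]
  split_ifs <;> simp <;> norm_num [← ENNReal.ofReal_add, ENNReal.toReal_ofReal]

lemma inRoute_tt (n : ℕ) (o d : ZMod n) (u : ZMod n) :
    inRoute n o d true (u, true) ↔ posRoute n o d u := by simp [inRoute]
lemma inRoute_ff (n : ℕ) (o d : ZMod n) (u : ZMod n) :
    inRoute n o d false (u, false) ↔ negRoute n o d u := by simp [inRoute]
lemma inRoute_tf (n : ℕ) (o d : ZMod n) (u : ZMod n) :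
    ¬ inRoute n o d true (u, false) := by simp [inRoute]
lemma inRoute_ft (n : ℕ) (o d : ZMod n) (u : ZMod n) :
    ¬ inRoute n o d false (u, true) := by simp [inRoute]

set_option maxHeartbeats 1000000 in
lemma core (n : ℕ) [NeZero n] (L : Finset (ZMod n × ZMod n))
    (ℓ₁ ℓ₂ ℓ₃ : ZMod n × ZMod n) (hm1 : ℓ₁ ∈ L) (hm2 : ℓ₂ ∈ L) (hm3 : ℓ₃ ∈ L)
    (h1 : ℓ₁.1 ≠ ℓ₁.2) (h2 : ℓ₂.1 ≠ ℓ₂.2) (h3 : ℓ₃.1 ≠ ℓ₃.2)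
    (v : ZMod n) (t : Bool)
    (hv1 : posRoute n ℓ₁.1 ℓ₁.2 v ↔ t = true)
    (hv2 : posRoute n ℓ₂.1 ℓ₂.2 v ↔ t = true)
    (hv3 : posRoute n ℓ₃.1 ℓ₃.2 v ↔ t = true)
    (hO1 : ∃ u, (posRoute n ℓ₂.1 ℓ₂.2 u ↔ posRoute n ℓ₃.1 ℓ₃.2 u) ∧
      ¬(posRoute n ℓ₁.1 ℓ₁.2 u ↔ posRoute n ℓ₃.1 ℓ₃.2 u))
    (hO2 : ∃ u, (posRoute n ℓ₁.1 ℓ₁.2 u ↔ posRoute n ℓ₃.1 ℓ₃.2 u) ∧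
      ¬(posRoute n ℓ₂.1 ℓ₂.2 u ↔ posRoute n ℓ₃.1 ℓ₃.2 u)) :
    ∃ (I : Type) (m : MeasurableSpace I) (μ : @Measure I m),
      @IsFiniteMeasure I m μ ∧ @NoAtoms I m μ ∧
      ∃ (od : I → ZMod n × ZMod n) (c : I → ZMod n × Bool → ℝ → ℝ) (σ σ' : I → Bool),
        (∀ i, od i ∈ L) ∧
        (∀ i a, ∃ α β : ℝ, 0 < α ∧ 0 ≤ β ∧ ∀ x, c i a x = α * x + β) ∧
        (∀ a, @MeasurableSet I m {i | inRoute n (od i).1 (od i).2 (σ i) a}) ∧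
        (∀ a, @MeasurableSet I m {i | inRoute n (od i).1 (od i).2 (σ' i) a}) ∧
        @IsEquilibrium I m μ n _ od c σ ∧ @IsEquilibrium I m μ n _ od c σ' ∧
        ∃ a : ZMod n × Bool, @flow I m μ n od σ a ≠ @flow I m μ n od σ' a := by
  set μ : Measure ℝ := volume.restrict (Set.Ioc (0:ℝ) 7) with hμ
  set od : ℝ → ZMod n × ZMod n := pwF ℓ₁ ℓ₂ ℓ₃ with hod
  set σ : ℝ → Bool := pwF false false true with hσ
  set σ' : ℝ → Bool := pwF true true false with hσ'
  set f : ZMod n × Bool → ℝ := flow μ n od σ with hf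
  set f' : ZMod n × Bool → ℝ := flow μ n od σ' with hf'
  -- flow values
  have hft : ∀ u : ZMod n, f (u, true) = if posRoute n ℓ₃.1 ℓ₃.2 u then 3 else 0 := by
    intro u
    rw [hf, hod, hσ, flow_eq]
    by_cases h : posRoute n ℓ₃.1 ℓ₃.2 u <;>
      simp [h, inRoute_ft, inRoute_tt]
  have hff : ∀ u : ZMod n, f (u, false)
      = (if negRoute n ℓ₁.1 ℓ₁.2 u then 2 else 0)
        + (if negRoute n ℓ₂.1 ℓ₂.2 u then 2 else 0) := by
    intro u
    rw [hf, hod, hσ, flow_eq]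
    simp [inRoute_tf, inRoute_ff]
  have hf't : ∀ u : ZMod n, f' (u, true)
      = (if posRoute n ℓ₁.1 ℓ₁.2 u then 2 else 0)
        + (if posRoute n ℓ₂.1 ℓ₂.2 u then 2 else 0) := by
    intro u
    rw [hf', hod, hσ', flow_eq]
    simp [inRoute_ft, inRoute_tt]
  have hf'f : ∀ u : ZMod n, f' (u, false) = if negRoute n ℓ₃.1 ℓ₃.2 u then 3 else 0 := by
    intro u
    rw [hf', hod, hσ', flow_eq]
    by_cases h : negRoute n ℓ₃.1 ℓ₃.2 u <;>
      simp [h, inRoute_tf, inRoute_ff]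
  -- routes as finsets
  set R1t := Finset.univ.filter (fun a : ZMod n × Bool => inRoute n ℓ₁.1 ℓ₁.2 true a) with hR1t
  set R1f := Finset.univ.filter (fun a : ZMod n × Bool => inRoute n ℓ₁.1 ℓ₁.2 false a) with hR1f
  set R2t := Finset.univ.filter (fun a : ZMod n × Bool => inRoute n ℓ₂.1 ℓ₂.2 true a) with hR2t
  set R2f := Finset.univ.filter (fun a : ZMod n × Bool => inRoute n ℓ₂.1 ℓ₂.2 false a) with hR2f
  set R3t := Finset.univ.filter (fun a : ZMod n × Bool => inRoute n ℓ₃.1 ℓ₃.2 true a) with hR3t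
  set R3f := Finset.univ.filter (fun a : ZMod n × Bool => inRoute n ℓ₃.1 ℓ₃.2 false a) with hR3f
  have hdisj : ∀ (o d : ZMod n),
      Disjoint (Finset.univ.filter (fun a : ZMod n × Bool => inRoute n o d false a))
        (Finset.univ.filter (fun a : ZMod n × Bool => inRoute n o d true a)) := by
    intro o d
    rw [Finset.disjoint_left]
    intro a haf hat
    have h1 := (Finset.mem_filter.mp haf).2.1
    have h2 := (Finset.mem_filter.mp hat).2.1
    rw [h1] at h2; exact Bool.false_ne_true h2
  have hnet : ∀ (o d : ZMod n), o ≠ d →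
      (Finset.univ.filter (fun a : ZMod n × Bool => inRoute n o d true a)).Nonempty := by
    intro o d h
    exact ⟨(o, true), Finset.mem_filter.mpr ⟨Finset.mem_univ _,
      (inRoute_tt n o d o).mpr (posRoute_self n o d h)⟩⟩
  have hnef : ∀ (o d : ZMod n), o ≠ d →
      (Finset.univ.filter (fun a : ZMod n × Bool => inRoute n o d false a)).Nonempty := by
    intro o d h
    exact ⟨(d, false), Finset.mem_filter.mpr ⟨Finset.mem_univ _,
      (inRoute_ff n o d d).mpr (negRoute_self n o d h)⟩⟩
  -- favorable arcs
  have hfav1 : ∃ a, (a ∈ R1t ∧ f' a < f a) ∨ (a ∈ R1f ∧ f a < f' a) := by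
    obtain ⟨u, hu13, hu2⟩ := hO2
    by_cases hp1 : posRoute n ℓ₁.1 ℓ₁.2 u
    · have hp3 : posRoute n ℓ₃.1 ℓ₃.2 u := hu13.mp hp1
      have hp2 : ¬ posRoute n ℓ₂.1 ℓ₂.2 u := fun h => hu2 ⟨fun _ => hp3, fun _ => h⟩
      refine ⟨(u, true), Or.inl ⟨Finset.mem_filter.mpr ⟨Finset.mem_univ _,
        (inRoute_tt _ _ _ _).mpr hp1⟩, ?_⟩⟩
      rw [hft u, hf't u, if_pos hp3, if_pos hp1, if_neg hp2]
      norm_num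
    · have hp3 : ¬ posRoute n ℓ₃.1 ℓ₃.2 u := fun h => hp1 (hu13.mpr h)
      have hp2 : posRoute n ℓ₂.1 ℓ₂.2 u := by tauto
      have hn1 : negRoute n ℓ₁.1 ℓ₁.2 u := (negRoute_iff n _ _ h1 u).mpr hp1
      have hn2 : ¬ negRoute n ℓ₂.1 ℓ₂.2 u := fun h => ((negRoute_iff n _ _ h2 u).mp h) hp2
      have hn3 : negRoute n ℓ₃.1 ℓ₃.2 u := (negRoute_iff n _ _ h3 u).mpr hp3
      refine ⟨(u, false), Or.inr ⟨Finset.mem_filter.mpr ⟨Finset.mem_univ _,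
        (inRoute_ff _ _ _ _).mpr hn1⟩, ?_⟩⟩
      rw [hff u, hf'f u, if_pos hn1, if_neg hn2, if_pos hn3]
      norm_num
  have hfav2 : ∃ a, (a ∈ R2t ∧ f' a < f a) ∨ (a ∈ R2f ∧ f a < f' a) := by
    obtain ⟨u, hu23, hu1⟩ := hO1
    by_cases hp2 : posRoute n ℓ₂.1 ℓ₂.2 u
    · have hp3 : posRoute n ℓ₃.1 ℓ₃.2 u := hu23.mp hp2
      have hp1 : ¬ posRoute n ℓ₁.1 ℓ₁.2 u := fun h => hu1 ⟨fun _ => hp3, fun _ => h⟩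
      refine ⟨(u, true), Or.inl ⟨Finset.mem_filter.mpr ⟨Finset.mem_univ _,
        (inRoute_tt _ _ _ _).mpr hp2⟩, ?_⟩⟩
      rw [hft u, hf't u, if_pos hp3, if_neg hp1, if_pos hp2]
      norm_num
    · have hp3 : ¬ posRoute n ℓ₃.1 ℓ₃.2 u := fun h => hp2 (hu23.mpr h)
      have hp1 : posRoute n ℓ₁.1 ℓ₁.2 u := by tauto
      have hn2 : negRoute n ℓ₂.1 ℓ₂.2 u := (negRoute_iff n _ _ h2 u).mpr hp2
      have hn1 : ¬ negRoute n ℓ₁.1 ℓ₁.2 u := fun h => ((negRoute_iff n _ _ h1 u).mp h) hp1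
      have hn3 : negRoute n ℓ₃.1 ℓ₃.2 u := (negRoute_iff n _ _ h3 u).mpr hp3
      refine ⟨(u, false), Or.inr ⟨Finset.mem_filter.mpr ⟨Finset.mem_univ _,
        (inRoute_ff _ _ _ _).mpr hn2⟩, ?_⟩⟩
      rw [hff u, hf'f u, if_neg hn1, if_pos hn2, if_pos hn3]
      norm_num
  have hfav3 : ∃ a, (a ∈ R3f ∧ f' a < f a) ∨ (a ∈ R3t ∧ f a < f' a) := by
    cases t with
    | true =>
      have hp1 : posRoute n ℓ₁.1 ℓ₁.2 v := hv1.mpr rfl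
      have hp2 : posRoute n ℓ₂.1 ℓ₂.2 v := hv2.mpr rfl
      have hp3 : posRoute n ℓ₃.1 ℓ₃.2 v := hv3.mpr rfl
      refine ⟨(v, true), Or.inr ⟨Finset.mem_filter.mpr ⟨Finset.mem_univ _,
        (inRoute_tt _ _ _ _).mpr hp3⟩, ?_⟩⟩
      rw [hft v, hf't v, if_pos hp3, if_pos hp1, if_pos hp2]
      norm_num
    | false =>
      have hp1 : ¬ posRoute n ℓ₁.1 ℓ₁.2 v := fun h => by simpa using hv1.mp h
      have hp2 : ¬ posRoute n ℓ₂.1 ℓ₂.2 v := fun h => by simpa using hv2.mp h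
      have hp3 : ¬ posRoute n ℓ₃.1 ℓ₃.2 v := fun h => by simpa using hv3.mp h
      have hn1 : negRoute n ℓ₁.1 ℓ₁.2 v := (negRoute_iff n _ _ h1 v).mpr hp1
      have hn2 : negRoute n ℓ₂.1 ℓ₂.2 v := (negRoute_iff n _ _ h2 v).mpr hp2
      have hn3 : negRoute n ℓ₃.1 ℓ₃.2 v := (negRoute_iff n _ _ h3 v).mpr hp3
      refine ⟨(v, false), Or.inl ⟨Finset.mem_filter.mpr ⟨Finset.mem_univ _,
        (inRoute_ff _ _ _ _).mpr hn3⟩, ?_⟩⟩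
      rw [hff v, hf'f v, if_pos hn1, if_pos hn2, if_pos hn3]
      norm_num
  -- costs
  obtain ⟨c₁, hc₁aff, hc₁f, hc₁f'⟩ := exists_cost R1f R1t (hdisj _ _) (hnef _ _ h1) (hnet _ _ h1)
    f f' (by obtain ⟨a, h⟩ := hfav1; exact ⟨a, by tauto⟩)
  obtain ⟨c₂, hc₂aff, hc₂f, hc₂f'⟩ := exists_cost R2f R2t (hdisj _ _) (hnef _ _ h2) (hnet _ _ h2)
    f f' (by obtain ⟨a, h⟩ := hfav2; exact ⟨a, by tauto⟩)
  obtain ⟨c₃, hc₃aff, hc₃f, hc₃f'⟩ := exists_cost R3t R3f (Disjoint.symm (hdisj _ _))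
    (hnet _ _ h3) (hnef _ _ h3) f f' (by obtain ⟨a, h⟩ := hfav3; exact ⟨a, by tauto⟩)
  set c : ℝ → ZMod n × Bool → ℝ → ℝ := pwF c₁ c₂ c₃ with hc
  have hcls : ∀ i : ℝ, (od i = ℓ₁ ∧ σ i = false ∧ σ' i = true ∧ c i = c₁)
      ∨ (od i = ℓ₂ ∧ σ i = false ∧ σ' i = true ∧ c i = c₂)
      ∨ (od i = ℓ₃ ∧ σ i = true ∧ σ' i = false ∧ c i = c₃) := by
    intro i
    by_cases hi1 : i ≤ 2
    · exact Or.inl ⟨by simp [hod, pwF, hi1], by simp [hσ, pwF, hi1],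
        by simp [hσ', pwF, hi1], by simp [hc, pwF, hi1]⟩
    · by_cases hi2 : i ≤ 4
      · exact Or.inr (Or.inl ⟨by simp [hod, pwF, hi1, hi2], by simp [hσ, pwF, hi1, hi2],
          by simp [hσ', pwF, hi1, hi2], by simp [hc, pwF, hi1, hi2]⟩)
      · exact Or.inr (Or.inr ⟨by simp [hod, pwF, hi1, hi2], by simp [hσ, pwF, hi1, hi2],
          by simp [hσ', pwF, hi1, hi2], by simp [hc, pwF, hi1, hi2]⟩)
  refine ⟨ℝ, inferInstance, μ, ?_, ?_, od, c, σ, σ', ?_, ?_, ?_, ?_, ?_, ?_, ?_⟩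
  · refine ⟨?_⟩
    rw [hμ, Measure.restrict_apply' measurableSet_Ioc, Set.univ_inter, Real.volume_Ioc]
    exact ENNReal.ofReal_lt_top
  · rw [hμ]; exact (inferInstance : NullSingletonClass (volume.restrict (Set.Ioc (0:ℝ) 7)))
  · intro i
    rcases hcls i with ⟨h, -⟩ | ⟨h, -⟩ | ⟨h, -⟩ <;> rw [h] <;> assumption
  · intro i a
    rcases hcls i with ⟨-, -, -, h⟩ | ⟨-, -, -, h⟩ | ⟨-, -, -, h⟩ <;> rw [h]
    · exact hc₁aff a
    · exact hc₂aff a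
    · exact hc₃aff a
  · intro a; rw [hod, hσ]; exact pw_measurable n ℓ₁ ℓ₂ ℓ₃ false false true a
  · intro a; rw [hod, hσ']; exact pw_measurable n ℓ₁ ℓ₂ ℓ₃ true true false a
  · intro i b
    rcases hcls i with ⟨hodi, hσi, -, hci⟩ | ⟨hodi, hσi, -, hci⟩ | ⟨hodi, hσi, -, hci⟩ <;>
      rw [hσi] <;> simp only [routeCost, hodi, hci] <;> cases b
    · exact le_refl _
    · exact hc₁f
    · exact le_refl _
    · exact hc₂f
    · exact hc₃f
    · exact le_refl _
  · intro i b
    rcases hcls i with ⟨hodi, -, hσi, hci⟩ | ⟨hodi, -, hσi, hci⟩ | ⟨hodi, -, hσi, hci⟩ <;>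
      rw [hσi] <;> simp only [routeCost, hodi, hci] <;> cases b
    · exact hc₁f'
    · exact le_refl _
    · exact hc₂f'
    · exact le_refl _
    · exact le_refl _
    · exact hc₃f'
  · refine ⟨(v, t), ?_⟩
    rw [← hf, ← hf']
    cases t with
    | true =>
      have hp1 : posRoute n ℓ₁.1 ℓ₁.2 v := hv1.mpr rfl
      have hp2 : posRoute n ℓ₂.1 ℓ₂.2 v := hv2.mpr rfl
      have hp3 : posRoute n ℓ₃.1 ℓ₃.2 v := hv3.mpr rfl
      rw [hft v, hf't v, if_pos hp3, if_pos hp1, if_pos hp2]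
      norm_num
    | false =>
      have hp1 : ¬ posRoute n ℓ₁.1 ℓ₁.2 v := fun h => by simpa using hv1.mp h
      have hp2 : ¬ posRoute n ℓ₂.1 ℓ₂.2 v := fun h => by simpa using hv2.mp h
      have hp3 : ¬ posRoute n ℓ₃.1 ℓ₃.2 v := fun h => by simpa using hv3.mp h
      have hn1 : negRoute n ℓ₁.1 ℓ₁.2 v := (negRoute_iff n _ _ h1 v).mpr hp1
      have hn2 : negRoute n ℓ₂.1 ℓ₂.2 v := (negRoute_iff n _ _ h2 v).mpr hp2
      have hn3 : negRoute n ℓ₃.1 ℓ₃.2 v := (negRoute_iff n _ _ h3 v).mpr hp3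
      rw [hff v, hf'f v, if_pos hn1, if_pos hn2, if_pos hn3]
      norm_num

lemma pick1 (A B C : Prop) (h12 : ¬(A ↔ B)) (h3 : C ↔ A) : (A ↔ C) ∧ ¬(B ↔ C) := by tauto
lemma pick2 (A B C : Prop) (h12 : ¬(A ↔ B)) (h3 : ¬(C ↔ A)) : (B ↔ C) ∧ ¬(A ↔ C) := by tauto
lemma pick3 (A B C : Prop) (h13 : ¬(A ↔ C)) (h2 : ¬(B ↔ C)) : (A ↔ B) ∧ ¬(C ↔ A) := by tauto
lemma conv1 (A B C : Prop) (h : (B ↔ C) ∧ ¬(A ↔ C)) : (C ↔ B) ∧ ¬(A ↔ B) := by tauto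
lemma conv2 (A B C : Prop) (h : (A ↔ B) ∧ ¬(C ↔ A)) : (A ↔ B) ∧ ¬(C ↔ B) := by tauto
lemma conv3 (A B C : Prop) (h : (A ↔ C) ∧ ¬(B ↔ C)) : (C ↔ A) ∧ ¬(B ↔ A) := by tauto
lemma conv4 (A B C : Prop) (h : (A ↔ B) ∧ ¬(C ↔ A)) : (B ↔ A) ∧ ¬(C ↔ A) := by tauto


set_option maxHeartbeats 1000000 in
/-- If some arc of the directed version of the cycle is contained in
at least three routes, then there are a nonatomic population, a partition into the
sets `I_ℓ` (given by the map `od`), and strictly increasing continuous affine cost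
functions admitting two Nash equilibria with distinct flows on some arc. -/
theorem nonuniqueness_of_three_routes (n : ℕ) [NeZero n] (hn : 3 ≤ n)
    (L : Finset (ZMod n × ZMod n)) (hL : ∀ ℓ ∈ L, ℓ.1 ≠ ℓ.2)
    (hthree : ∃ a : ZMod n × Bool,
      3 ≤ (L.filter (fun ℓ => inRoute n ℓ.1 ℓ.2 a.2 a)).card) :
    ∃ (I : Type) (m : MeasurableSpace I) (μ : @Measure I m),
      @IsFiniteMeasure I m μ ∧ @NoAtoms I m μ ∧
      ∃ (od : I → ZMod n × ZMod n) (c : I → ZMod n × Bool → ℝ → ℝ) (σ σ' : I → Bool),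
        (∀ i, od i ∈ L) ∧
        (∀ i a, ∃ α β : ℝ, 0 < α ∧ 0 ≤ β ∧ ∀ x, c i a x = α * x + β) ∧
        (∀ a, @MeasurableSet I m {i | inRoute n (od i).1 (od i).2 (σ i) a}) ∧
        (∀ a, @MeasurableSet I m {i | inRoute n (od i).1 (od i).2 (σ' i) a}) ∧
        @IsEquilibrium I m μ n _ od c σ ∧ @IsEquilibrium I m μ n _ od c σ' ∧
        ∃ a : ZMod n × Bool, @flow I m μ n od σ a ≠ @flow I m μ n od σ' a := by
  obtain ⟨⟨v, t⟩, hcard⟩ := hthree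
  set M := L.filter (fun ℓ => inRoute n ℓ.1 ℓ.2 (v, t).2 (v, t)) with hMdef
  obtain ⟨ℓ₁, hℓ₁⟩ : M.Nonempty := Finset.card_pos.mp (by omega)
  have hc1 : 2 ≤ (M.erase ℓ₁).card := by rw [Finset.card_erase_of_mem hℓ₁]; omega
  obtain ⟨ℓ₂, hℓ₂⟩ : (M.erase ℓ₁).Nonempty := Finset.card_pos.mp (by omega)
  have hc2 : 1 ≤ ((M.erase ℓ₁).erase ℓ₂).card := by
    rw [Finset.card_erase_of_mem hℓ₂]; omega
  obtain ⟨ℓ₃, hℓ₃⟩ : ((M.erase ℓ₁).erase ℓ₂).Nonempty := Finset.card_pos.mp (by omega)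
  have h21 : ℓ₂ ≠ ℓ₁ := (Finset.mem_erase.mp hℓ₂).1
  have hℓ₂M : ℓ₂ ∈ M := (Finset.mem_erase.mp hℓ₂).2
  have h32 : ℓ₃ ≠ ℓ₂ := (Finset.mem_erase.mp hℓ₃).1
  have hℓ₃e : ℓ₃ ∈ M.erase ℓ₁ := (Finset.mem_erase.mp hℓ₃).2
  have h31 : ℓ₃ ≠ ℓ₁ := (Finset.mem_erase.mp hℓ₃e).1
  have hℓ₃M : ℓ₃ ∈ M := (Finset.mem_erase.mp hℓ₃e).2
  have hmemL : ∀ ℓ ∈ M, ℓ ∈ L := fun ℓ h => (Finset.mem_filter.mp h).1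
  have hL1 : ℓ₁ ∈ L := hmemL _ hℓ₁
  have hL2 : ℓ₂ ∈ L := hmemL _ hℓ₂M
  have hL3 : ℓ₃ ∈ L := hmemL _ hℓ₃M
  have hne1 : ℓ₁.1 ≠ ℓ₁.2 := hL _ hL1
  have hne2 : ℓ₂.1 ≠ ℓ₂.2 := hL _ hL2
  have hne3 : ℓ₃.1 ≠ ℓ₃.2 := hL _ hL3
  have hvfact : ∀ ℓ ∈ M, ℓ.1 ≠ ℓ.2 → (posRoute n ℓ.1 ℓ.2 v ↔ t = true) := by
    intro ℓ h hne
    have hin : inRoute n ℓ.1 ℓ.2 (v, t).2 (v, t) := (Finset.mem_filter.mp h).2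
    have hin2 := hin.2
    cases t with
    | true => simpa using hin2
    | false =>
      simp only [if_neg (Bool.false_ne_true)] at hin2
      have := (negRoute_iff n ℓ.1 ℓ.2 hne v).mp (by simpa using hin2)
      simp [this]
  have hv1 := hvfact ℓ₁ hℓ₁ hne1
  have hv2 := hvfact ℓ₂ hℓ₂M hne2
  have hv3 := hvfact ℓ₃ hℓ₃M hne3
  have hn2 : 2 ≤ n := by omega
  have hdist : ∀ ℓ ℓ' : ZMod n × ZMod n, ℓ.1 ≠ ℓ.2 → ℓ'.1 ≠ ℓ'.2 → ℓ ≠ ℓ' →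
      ∃ u, ¬(posRoute n ℓ.1 ℓ.2 u ↔ posRoute n ℓ'.1 ℓ'.2 u) := by
    intro ℓ ℓ' hd hd' hne
    by_contra h
    push_neg at h
    have h' : ∀ u, posRoute n ℓ.1 ℓ.2 u ↔ posRoute n ℓ'.1 ℓ'.2 u := fun u => h u
    obtain ⟨e1, e2⟩ := posRoute_inj n hn2 ℓ.1 ℓ.2 ℓ'.1 ℓ'.2 hd hd' h'
    exact hne (Prod.ext e1 e2)
  obtain ⟨u12, hu12⟩ := hdist ℓ₁ ℓ₂ hne1 hne2 (fun h => h21 h.symm)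
  obtain ⟨u13, hu13⟩ := hdist ℓ₁ ℓ₃ hne1 hne3 (fun h => h31 h.symm)
  obtain ⟨u23, hu23⟩ := hdist ℓ₂ ℓ₃ hne2 hne3 (fun h => h32 h.symm)
  let P₁ : ZMod n → Prop := fun u => posRoute n ℓ₁.1 ℓ₁.2 u
  let P₂ : ZMod n → Prop := fun u => posRoute n ℓ₂.1 ℓ₂.2 u
  let P₃ : ZMod n → Prop := fun u => posRoute n ℓ₃.1 ℓ₃.2 u
  have d12 : (∃ u, (P₂ u ↔ P₃ u) ∧ ¬(P₁ u ↔ P₃ u)) ∨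
      (∃ u, (P₁ u ↔ P₃ u) ∧ ¬(P₂ u ↔ P₃ u)) := by
    by_cases h3 : P₃ u12 ↔ P₁ u12
    · exact Or.inr ⟨u12, pick1 _ _ _ hu12 h3⟩
    · exact Or.inl ⟨u12, pick2 _ _ _ hu12 h3⟩
  have d13 : (∃ u, (P₂ u ↔ P₃ u) ∧ ¬(P₁ u ↔ P₃ u)) ∨
      (∃ u, (P₁ u ↔ P₂ u) ∧ ¬(P₃ u ↔ P₁ u)) := by
    by_cases h2 : P₂ u13 ↔ P₃ u13
    · exact Or.inl ⟨u13, h2, hu13⟩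
    · exact Or.inr ⟨u13, pick3 _ _ _ hu13 h2⟩
  have d23 : (∃ u, (P₁ u ↔ P₃ u) ∧ ¬(P₂ u ↔ P₃ u)) ∨
      (∃ u, (P₁ u ↔ P₂ u) ∧ ¬(P₃ u ↔ P₁ u)) := by
    by_cases h1 : P₁ u23 ↔ P₃ u23
    · exact Or.inl ⟨u23, h1, hu23⟩
    · exact Or.inr ⟨u23, pick3 _ _ _ h1 hu23⟩
  rcases d12 with o1 | o2
  · rcases d23 with o2 | o3
    · -- O1 ∧ O2 : special ℓ₃
      exact core n L ℓ₁ ℓ₂ ℓ₃ hL1 hL2 hL3 hne1 hne2 hne3 v t hv1 hv2 hv3 o1 o2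
    · -- O1 ∧ O3 : special ℓ₂ ; labels (ℓ₁, ℓ₃, ℓ₂)
      refine core n L ℓ₁ ℓ₃ ℓ₂ hL1 hL3 hL2 hne1 hne3 hne2 v t hv1 hv3 hv2 ?_ ?_
      · obtain ⟨u, hu⟩ := o1; exact ⟨u, conv1 _ _ _ hu⟩
      · obtain ⟨u, hu⟩ := o3; exact ⟨u, conv2 _ _ _ hu⟩
  · rcases d13 with o1 | o3
    · exact core n L ℓ₁ ℓ₂ ℓ₃ hL1 hL2 hL3 hne1 hne2 hne3 v t hv1 hv2 hv3 o1 o2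
    · -- O2 ∧ O3 : special ℓ₁ ; labels (ℓ₂, ℓ₃, ℓ₁)
      refine core n L ℓ₂ ℓ₃ ℓ₁ hL2 hL3 hL1 hne2 hne3 hne1 v t hv2 hv3 hv1 ?_ ?_
      · obtain ⟨u, hu⟩ := o2; exact ⟨u, conv3 _ _ _ hu⟩
      · obtain ⟨u, hu⟩ := o3; exact ⟨u, conv4 _ _ _ hu⟩
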